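/- Let T : ℓ₁ → ℓ₁ be T(x₁,x₂,…) = (1,x₁,x₂,…). For each integer N ≥ 1 define h^{(N)}(x) = Σ_{j>N} (−x_j) + Σ_{j=1}^N (|x_j − 1| − 1). Then for all x ∈ ℓ₁, h^{(N)}(x) − h^{(N)}(Tx) = |x_N − 1| + x_N ≥ 1; in particular each h^{(N)} is subinvariant for T. -/

import Mathlib

open scoped ENNReal

lemma aux_summable (x : lp (fun _ : ℕ => ℝ) 1) : Summable (fun n : ℕ => (x n : ℝ)) := by
  have h1 : Summable fun n => ‖(x n : ℝ)‖ ^ (1 : ℝ≥0∞).toReal :=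
    (lp.memℓp x).summable (by norm_num)
  simp only [ENNReal.toReal_one, Real.rpow_one, pow_one] at h1
  exact h1.of_norm

/-- For the shift `T(x₁,x₂,…) = (1,x₁,x₂,…)` on `ℓ₁` (coordinates indexed from 0, so
`x_j` of the paper is `x (j-1)`) and, for an integer `N ≥ 1` (here `N + 1`),
`h^{(N)}(x) = Σ_{j>N} (−x_j) + Σ_{j=1}^N (|x_j − 1| − 1)`, one has
`h^{(N)}(x) − h^{(N)}(Tx) = |x_N − 1| + x_N ≥ 1`; in particular `h^{(N)}` is
subinvariant for `T`. -/
theorem stmt_8 (T : lp (fun _ : ℕ => ℝ) 1 → lp (fun _ : ℕ => ℝ) 1)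
    (hT : ∀ x : lp (fun _ : ℕ => ℝ) 1,
      (T x) 0 = 1 ∧ ∀ n : ℕ, (T x) (n + 1) = x n)
    (N : ℕ)
    (h : lp (fun _ : ℕ => ℝ) 1 → ℝ)
    (hh : ∀ x, h x = (∑' j : ℕ, (- x (j + N + 1)))
        + ∑ j ∈ Finset.range (N + 1), (|x j - 1| - 1)) :
    ∀ x : lp (fun _ : ℕ => ℝ) 1,
      h x - h (T x) = |x N - 1| + x N ∧ 1 ≤ |x N - 1| + x N ∧ h (T x) ≤ h x := by
  intro x
  obtain ⟨hT0, hTs⟩ := hT x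
  have hsum : Summable (fun n : ℕ => (x n : ℝ)) := aux_summable x
  -- tsum part for Tx
  have h1 : (∑' j : ℕ, (- (T x) (j + N + 1))) = - x N + ∑' j : ℕ, (- x (j + N + 1)) := by
    have e : (fun j : ℕ => (- (T x) (j + N + 1))) = fun j : ℕ => - x (j + N) := by
      funext j; rw [hTs (j + N)]
    rw [e]
    have hs : Summable (fun j : ℕ => - x (j + N)) :=
      ((summable_nat_add_iff N).mpr hsum).neg
    have := Summable.tsum_eq_zero_add hs
    simp only [zero_add] at this
    rw [this]
    congr 1
    apply tsum_congr
    intro j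
    rw [Nat.add_right_comm]
  -- finite sum part for Tx
  have h2 : (∑ j ∈ Finset.range (N + 1), (|(T x) j - 1| - 1))
      = -1 + ∑ j ∈ Finset.range N, (|x j - 1| - 1) := by
    rw [Finset.sum_range_succ']
    rw [hT0]
    simp only [sub_self, abs_zero, zero_sub]
    rw [add_comm]
    congr 1
    apply Finset.sum_congr rfl
    intro j _
    rw [hTs j]
  -- finite sum for x
  have h3 : (∑ j ∈ Finset.range (N + 1), (|x j - 1| - 1))
      = (∑ j ∈ Finset.range N, (|x j - 1| - 1)) + (|x N - 1| - 1) := by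
    rw [Finset.sum_range_succ]
  have key : h x - h (T x) = |x N - 1| + x N := by
    rw [hh x, hh (T x), h1, h2, h3]; ring
  have key2 : 1 ≤ |x N - 1| + x N := by
    have : 1 - x N ≤ |x N - 1| := by
      rw [abs_sub_comm]; exact le_abs_self _
    linarith
  exact ⟨key, key2, by linarith⟩
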